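/- Let P = (X,≺) be a finite poset with n elements and z₁ ≺ z₂ ≺ z₃ distinct. Suppose F(k,ℓ+2) = F(k+2,ℓ) = 0 and F(k,ℓ)·F(k+1,ℓ+1) > 0 for some k,ℓ ≥ 1. Then every element of X is comparable to z₂. -/
import Mathlib

/-- The number of linear extensions `L` of a finite poset `X`
(order-preserving bijections `X ≃ Fin (card X)`) such that
`L z₂ − L z₁ = k` and `L z₃ − L z₂ = l`. -/
noncomputable def F (X : Type) [PartialOrder X] [Fintype X] (z₁ z₂ z₃ : X) (k l : ℕ) : ℕ :=
  Nat.card {L : X ≃ Fin (Fintype.card X) // (∀ a b : X, a < b → L a < L b) ∧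
    (L z₂ : ℕ) = (L z₁ : ℕ) + k ∧ (L z₃ : ℕ) = (L z₂ : ℕ) + l}

namespace CPV
variable {X : Type} [PartialOrder X] [Fintype X]
attribute [local instance] Classical.propDecidable
set_option linter.unusedSectionVars false
set_option linter.unusedVariables false

/-- `L` is a linear extension. -/
def Ext (L : X ≃ Fin (Fintype.card X)) : Prop := ∀ a b : X, a < b → L a < L b

lemma swap_step {L : X ≃ Fin (Fintype.card X)} (hL : Ext L) {x y : X}
    (hxy : (L y : ℕ) = (L x : ℕ) + 1) (hnc : ¬ x < y) :
    ∃ L' : X ≃ Fin (Fintype.card X), Ext L' ∧ (∀ z : X, z ≠ x → z ≠ y → L' z = L z) ∧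
      L' x = L y ∧ L' y = L x := by
  refine ⟨L.trans (Equiv.swap (L x) (L y)), ?_, ?_, ?_, ?_⟩
  · intro a b hab
    have hab' : (L a : ℕ) < (L b : ℕ) := hL a b hab
    simp only [Equiv.trans_apply]
    rw [Fin.lt_def]
    rcases eq_or_ne a x with rfl | hax
    · -- a = x; b ≠ x, b ≠ y
      have hby : b ≠ y := fun h => hnc (h ▸ hab)
      have hbx : b ≠ a := fun h => absurd (h ▸ hab) (lt_irrefl _)
      rw [Equiv.swap_apply_left, Equiv.swap_apply_of_ne_of_ne
        (fun h => hbx (L.injective h)) (fun h => hby (L.injective h))]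
      have : (L b : ℕ) ≠ (L y : ℕ) := fun h => hby (L.injective (Fin.val_injective h))
      omega
    rcases eq_or_ne a y with rfl | hay
    · -- a = y : b ≠ y; b ≠ x since x < y... b = x would give y < x, but L y > L x
      have hbx : b ≠ x := by
        rintro rfl
        have := hL a b hab
        rw [Fin.lt_def] at this; omega
      have hby : b ≠ a := fun h => absurd (h ▸ hab) (lt_irrefl _)
      rw [Equiv.swap_apply_right, Equiv.swap_apply_of_ne_of_ne
        (fun h => hbx (L.injective h)) (fun h => hby (L.injective h))]
      omega
    · rw [Equiv.swap_apply_of_ne_of_ne (fun h => hax (L.injective h))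
        (fun h => hay (L.injective h))]
      rcases eq_or_ne b x with rfl | hbx
      · rw [Equiv.swap_apply_left]
        have : (L a : ℕ) ≠ (L y : ℕ) := fun h => hay (L.injective (Fin.val_injective h))
        omega
      rcases eq_or_ne b y with rfl | hby
      · rw [Equiv.swap_apply_right]
        have : (L a : ℕ) ≠ (L x : ℕ) := fun h => hax (L.injective (Fin.val_injective h))
        omega
      · rw [Equiv.swap_apply_of_ne_of_ne (fun h => hbx (L.injective h))
          (fun h => hby (L.injective h))]
        exact hab'
  · intro z hzx hzy
    simp only [Equiv.trans_apply]
    exact Equiv.swap_apply_of_ne_of_ne (fun h => hzx (L.injective h)) (fun h => hzy (L.injective h))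
  · simp [Equiv.trans_apply]
  · simp [Equiv.trans_apply]

lemma push_up (d : ℕ) {L : X ≃ Fin (Fintype.card X)} (hL : Ext L) {x : X} {t : ℕ}
    (htn : t < Fintype.card X) (hd : t = (L x : ℕ) + d)
    (hblock : ∀ y : X, (L x : ℕ) < (L y : ℕ) → (L y : ℕ) ≤ t → ¬ x < y) :
    ∃ L' : X ≃ Fin (Fintype.card X), Ext L' ∧ (L' x : ℕ) = t ∧
      (∀ z : X, (L z : ℕ) < (L x : ℕ) → (L' z : ℕ) = (L z : ℕ)) ∧
      (∀ z : X, (L x : ℕ) < (L z : ℕ) → (L z : ℕ) ≤ t → (L' z : ℕ) + 1 = (L z : ℕ)) ∧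
      (∀ z : X, t < (L z : ℕ) → (L' z : ℕ) = (L z : ℕ)) := by
  induction d generalizing L with
  | zero =>
    exact ⟨L, hL, hd.symm, fun z _ => rfl, fun z h1 h2 => by omega, fun z _ => rfl⟩
  | succ d ih =>
    set y₀ : X := L.symm ⟨(L x : ℕ) + 1, by omega⟩ with hy₀
    have hLy₀ : (L y₀ : ℕ) = (L x : ℕ) + 1 := by
      rw [hy₀, Equiv.apply_symm_apply]
    have hnc : ¬ x < y₀ := hblock y₀ (by omega) (by omega)
    obtain ⟨L₁, hL₁, hother, hLx, hLy⟩ := swap_step hL hLy₀ hnc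
    have hL₁x : (L₁ x : ℕ) = (L x : ℕ) + 1 := by rw [hLx, hLy₀]
    have hL₁y₀ : (L₁ y₀ : ℕ) = (L x : ℕ) := by rw [hLy]
    have hxy₀ : x ≠ y₀ := fun h => by rw [h] at hLy₀; omega
    have hL₁other : ∀ z : X, z ≠ x → z ≠ y₀ → (L₁ z : ℕ) = (L z : ℕ) := by
      intro z h1 h2; rw [hother z h1 h2]
    have hblock1 : ∀ y : X, (L₁ x : ℕ) < (L₁ y : ℕ) → (L₁ y : ℕ) ≤ t → ¬ x < y := by
      intro y h1 h2
      have hyx : y ≠ x := fun h => by rw [h] at h1; omega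
      have hyy₀ : y ≠ y₀ := fun h => by rw [h, hL₁y₀] at h1; omega
      have heq := hL₁other y hyx hyy₀
      exact hblock y (by omega) (by omega)
    obtain ⟨L', hE, h0, hbelow, hwin, habove⟩ := ih hL₁ (by omega) hblock1
    refine ⟨L', hE, h0, ?_, ?_, ?_⟩
    · intro z hz
      have hzx : z ≠ x := fun h => by rw [h] at hz; omega
      have hzy : z ≠ y₀ := fun h => by rw [h] at hz; omega
      have := hL₁other z hzx hzy
      rw [← this] at hz ⊢
      exact hbelow z (by omega)
    · intro z hz1 hz2
      rcases eq_or_ne z y₀ with rfl | hzy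
      · rw [hbelow y₀ (by omega), hL₁y₀]; omega
      · have hzx : z ≠ x := fun h => by rw [h] at hz1; omega
        have heq := hL₁other z hzx hzy
        have hzval : (L z : ℕ) ≠ (L x : ℕ) + 1 := by
          intro h
          exact hzy (L.injective (Fin.val_injective (by rw [hLy₀, h])))
        rw [← heq] at hz2 ⊢
        exact hwin z (by omega) hz2
    · intro z hz
      have hzx : z ≠ x := fun h => by rw [h] at hz; omega
      have hzy : z ≠ y₀ := fun h => by rw [h] at hz; omega
      have heq := hL₁other z hzx hzy
      rw [← heq] at hz ⊢
      exact habove z hz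

lemma push_down (d : ℕ) {L : X ≃ Fin (Fintype.card X)} (hL : Ext L) {x : X} {t : ℕ}
    (hd : (L x : ℕ) = t + d)
    (hblock : ∀ y : X, t ≤ (L y : ℕ) → (L y : ℕ) < (L x : ℕ) → ¬ y < x) :
    ∃ L' : X ≃ Fin (Fintype.card X), Ext L' ∧ (L' x : ℕ) = t ∧
      (∀ z : X, (L z : ℕ) < t → (L' z : ℕ) = (L z : ℕ)) ∧
      (∀ z : X, t ≤ (L z : ℕ) → (L z : ℕ) < (L x : ℕ) → (L' z : ℕ) = (L z : ℕ) + 1) ∧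
      (∀ z : X, (L x : ℕ) < (L z : ℕ) → (L' z : ℕ) = (L z : ℕ)) := by
  induction d generalizing L with
  | zero =>
    exact ⟨L, hL, by omega, fun z _ => rfl, fun z h1 h2 => by omega, fun z _ => rfl⟩
  | succ d ih =>
    have hxn : (L x : ℕ) < Fintype.card X := (L x).isLt
    set y₀ : X := L.symm ⟨t + d, by omega⟩ with hy₀
    have hLy₀ : (L y₀ : ℕ) = t + d := by rw [hy₀, Equiv.apply_symm_apply]
    have hxy : (L x : ℕ) = (L y₀ : ℕ) + 1 := by omega
    have hnc : ¬ y₀ < x := hblock y₀ (by omega) (by omega)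
    obtain ⟨L₁, hL₁, hother, hLy, hLx⟩ := swap_step (x := y₀) (y := x) hL hxy hnc
    -- swap_step with x := y₀, y := x : L₁ y₀ = L x, L₁ x = L y₀
    have hL₁x : (L₁ x : ℕ) = t + d := by rw [hLx]; omega
    have hL₁y₀ : (L₁ y₀ : ℕ) = (L x : ℕ) := by rw [hLy]
    have hxy₀ : x ≠ y₀ := fun h => by rw [h] at hxy; omega
    have hL₁other : ∀ z : X, z ≠ y₀ → z ≠ x → (L₁ z : ℕ) = (L z : ℕ) := by
      intro z h1 h2; rw [hother z h1 h2]
    have hblock1 : ∀ y : X, t ≤ (L₁ y : ℕ) → (L₁ y : ℕ) < (L₁ x : ℕ) → ¬ y < x := by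
      intro y h1 h2
      have hyx : y ≠ x := fun h => by rw [h] at h2; omega
      have hyy₀ : y ≠ y₀ := fun h => by rw [h, hL₁y₀] at h2; omega
      have heq := hL₁other y hyy₀ hyx
      exact hblock y (by omega) (by omega)
    obtain ⟨L', hE, h0, hbelow, hwin, habove⟩ := ih hL₁ (by omega) hblock1
    refine ⟨L', hE, h0, ?_, ?_, ?_⟩
    · intro z hz
      have hzx : z ≠ x := fun h => by rw [h] at hz; omega
      have hzy : z ≠ y₀ := fun h => by rw [h, hLy₀] at hz; omega
      have heq := hL₁other z hzy hzx
      rw [← heq] at hz ⊢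
      exact hbelow z hz
    · intro z hz1 hz2
      rcases eq_or_ne z y₀ with rfl | hzy
      · rw [habove y₀ (by omega), hL₁y₀]; omega
      · have hzx : z ≠ x := fun h => by rw [h] at hz2; omega
        have heq := hL₁other z hzy hzx
        have hzval : (L z : ℕ) ≠ t + d := by
          intro h
          exact hzy (L.injective (Fin.val_injective (by rw [hLy₀, h])))
        rw [← heq] at hz1 hz2 ⊢
        exact hwin z hz1 (by omega)
    · intro z hz
      have hzx : z ≠ x := fun h => by rw [h] at hz; omega
      have hzy : z ≠ y₀ := fun h => by rw [h, hLy₀] at hz; omega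
      have heq := hL₁other z hzy hzx
      rw [← heq] at hz ⊢
      exact habove z (by omega)

open Finset in
lemma card_filter_lt (L : X ≃ Fin (Fintype.card X)) (i : Fin (Fintype.card X)) :
    (Finset.univ.filter fun x : X => L x < i).card = (i : ℕ) := by
  classical
  rw [← Fin.card_Iio (b := i), ← Finset.card_image_of_injective _ L.injective]
  congr 1
  ext j
  simp only [Finset.mem_image, Finset.mem_filter, Finset.mem_univ, true_and, Finset.mem_Iio]
  constructor
  · rintro ⟨x, hx, rfl⟩; exact hx
  · intro hj; exact ⟨L.symm j, by simpa using hj, by simp⟩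

open Finset in
lemma card_filter_gt (L : X ≃ Fin (Fintype.card X)) (i : Fin (Fintype.card X)) :
    (Finset.univ.filter fun x : X => i < L x).card = Fintype.card X - 1 - (i : ℕ) := by
  classical
  rw [← Fin.card_Ioi (a := i), ← Finset.card_image_of_injective _ L.injective]
  congr 1
  ext j
  simp only [Finset.mem_image, Finset.mem_filter, Finset.mem_univ, true_and, Finset.mem_Ioi]
  constructor
  · rintro ⟨x, hx, rfl⟩; exact hx
  · intro hj; exact ⟨L.symm j, by simpa using hj, by simp⟩

variable {z₁ z₂ z₃ : X}

open Finset in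
lemma d1_le {L : X ≃ Fin (Fintype.card X)} (hL : Ext L) :
    (Finset.univ.filter fun x : X => x < z₁).card ≤ (L z₁ : ℕ) := by
  classical
  rw [← card_filter_lt L (L z₁)]
  exact Finset.card_le_card (fun x hx => by
    simp only [Finset.mem_filter, Finset.mem_univ, true_and] at hx ⊢
    exact hL _ _ hx)

open Finset in
lemma d1_lt_of_pool {L : X ≃ Fin (Fintype.card X)} (hL : Ext L) {x : X}
    (hx : (L x : ℕ) < (L z₁ : ℕ)) (hnx : ¬ x ≤ z₁) :
    (Finset.univ.filter fun x : X => x < z₁).card < (L z₁ : ℕ) := by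
  classical
  rw [← card_filter_lt L (L z₁)]
  apply Finset.card_lt_card
  constructor
  · intro y hy
    simp only [Finset.mem_filter, Finset.mem_univ, true_and] at hy ⊢
    exact hL _ _ hy
  · intro hsub
    have hx' : x ∈ Finset.univ.filter fun y : X => L y < L z₁ := by
      simp only [Finset.mem_filter, Finset.mem_univ, true_and, Fin.lt_def]
      omega
    have := hsub hx'
    simp only [Finset.mem_filter, Finset.mem_univ, true_and] at this
    exact hnx this.le

open Finset in
lemma exists_pool1 {L : X ≃ Fin (Fintype.card X)} (hL : Ext L)
    (h : (Finset.univ.filter fun x : X => x < z₁).card < (L z₁ : ℕ)) :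
    ∃ x : X, (L x : ℕ) < (L z₁ : ℕ) ∧ ¬ x ≤ z₁ := by
  classical
  by_contra hc
  push_neg at hc
  have hsub : (Finset.univ.filter fun x : X => L x < L z₁) ⊆
      (Finset.univ.filter fun x : X => x < z₁) := by
    intro y hy
    simp only [Finset.mem_filter, Finset.mem_univ, true_and, Fin.lt_def] at hy ⊢
    have hle := hc y hy
    have : y ≠ z₁ := by rintro rfl; omega
    exact lt_of_le_of_ne hle this
  have := Finset.card_le_card hsub
  rw [card_filter_lt] at this
  omega

open Finset in
lemma u3_le {L : X ≃ Fin (Fintype.card X)} (hL : Ext L) :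
    (L z₃ : ℕ) + (Finset.univ.filter fun x : X => z₃ < x).card + 1 ≤ Fintype.card X := by
  classical
  have h1 : (Finset.univ.filter fun x : X => z₃ < x).card ≤ Fintype.card X - 1 - (L z₃ : ℕ) := by
    rw [← card_filter_gt L (L z₃)]
    exact Finset.card_le_card (fun x hx => by
      simp only [Finset.mem_filter, Finset.mem_univ, true_and] at hx ⊢
      exact hL _ _ hx)
  have h2 : (L z₃ : ℕ) < Fintype.card X := (L z₃).isLt
  omega

open Finset in
lemma exists_pool3 {L : X ≃ Fin (Fintype.card X)} (hL : Ext L)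
    (h : (L z₃ : ℕ) + (Finset.univ.filter fun x : X => z₃ < x).card + 2 ≤ Fintype.card X) :
    ∃ x : X, (L z₃ : ℕ) < (L x : ℕ) ∧ ¬ z₃ ≤ x := by
  classical
  by_contra hc
  push_neg at hc
  have hsub : (Finset.univ.filter fun x : X => L z₃ < L x) ⊆
      (Finset.univ.filter fun x : X => z₃ < x) := by
    intro y hy
    simp only [Finset.mem_filter, Finset.mem_univ, true_and, Fin.lt_def] at hy ⊢
    have hle := hc y hy
    have : y ≠ z₃ := by rintro rfl; omega
    exact lt_of_le_of_ne hle (Ne.symm this)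
  have := Finset.card_le_card hsub
  rw [card_filter_gt] at this
  have h2 : (L z₃ : ℕ) < Fintype.card X := (L z₃).isLt
  omega

variable {z₁ z₂ z₃ : X}

/-- An element `≠ z` whose value equals `L z`'s value is `z`. -/
private lemma val_eq_imp {L : X ≃ Fin (Fintype.card X)} {a b : X}
    (h : (L a : ℕ) = (L b : ℕ)) : a = b :=
  L.injective (Fin.val_injective h)

/-- Cross `z₁` upward: some element not below `z₁` sits below `z₁`. -/
lemma crossZ1 {L : X ≃ Fin (Fintype.card X)} (hL : Ext L) {x : X}
    (hx : (L x : ℕ) < (L z₁ : ℕ)) (hnx : ¬ x ≤ z₁) (h12 : z₁ < z₂) (h23 : z₂ < z₃) :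
    ∃ L' : X ≃ Fin (Fintype.card X), Ext L' ∧ (L' z₁ : ℕ) + 1 = (L z₁ : ℕ) ∧
      (L' z₂ : ℕ) = (L z₂ : ℕ) ∧ (L' z₃ : ℕ) = (L z₃ : ℕ) := by
  classical
  set P : Finset X := Finset.univ.filter (fun y : X => (L y : ℕ) < (L z₁ : ℕ) ∧ ¬ y ≤ z₁) with hP
  have hxP : x ∈ P := by
    simp only [hP, Finset.mem_filter, Finset.mem_univ, true_and]
    exact ⟨hx, hnx⟩
  obtain ⟨w, hwP, hwmax⟩ := P.exists_max_image (fun y => (L y : ℕ)) ⟨x, hxP⟩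
  simp only [hP, Finset.mem_filter, Finset.mem_univ, true_and] at hwP
  obtain ⟨hw1, hw2⟩ := hwP
  have hblock : ∀ y : X, (L w : ℕ) < (L y : ℕ) → (L y : ℕ) ≤ (L z₁ : ℕ) → ¬ w < y := by
    intro y hy1 hy2 hlt
    rcases eq_or_lt_of_le hy2 with heq | hlt2
    · exact hw2 ((val_eq_imp heq) ▸ hlt.le)
    · by_cases hyz : y ≤ z₁
      · exact hw2 (hlt.le.trans hyz)
      · have hyP : y ∈ P := by
          simp only [hP, Finset.mem_filter, Finset.mem_univ, true_and]
          exact ⟨hlt2, hyz⟩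
        have := hwmax y hyP
        omega
  obtain ⟨L', hE, h0, hbelow, hwin, habove⟩ :=
    push_up ((L z₁ : ℕ) - (L w : ℕ)) hL (L z₁).isLt (by omega) hblock
  refine ⟨L', hE, ?_, ?_, ?_⟩
  · rw [hwin z₁ (by omega) (by omega)]
  · exact habove z₂ (by have := hL _ _ h12; rw [Fin.lt_def] at this; omega)
  · exact habove z₃ (by have := hL _ _ (h12.trans h23); rw [Fin.lt_def] at this; omega)

/-- Cross `z₃` downward. -/
lemma crossZ3 {L : X ≃ Fin (Fintype.card X)} (hL : Ext L) {x : X}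
    (hx : (L z₃ : ℕ) < (L x : ℕ)) (hnx : ¬ z₃ ≤ x) (h12 : z₁ < z₂) (h23 : z₂ < z₃) :
    ∃ L' : X ≃ Fin (Fintype.card X), Ext L' ∧ (L' z₁ : ℕ) = (L z₁ : ℕ) ∧
      (L' z₂ : ℕ) = (L z₂ : ℕ) ∧ (L' z₃ : ℕ) = (L z₃ : ℕ) + 1 := by
  classical
  set P : Finset X := Finset.univ.filter (fun y : X => (L z₃ : ℕ) < (L y : ℕ) ∧ ¬ z₃ ≤ y) with hP
  have hxP : x ∈ P := by
    simp only [hP, Finset.mem_filter, Finset.mem_univ, true_and]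
    exact ⟨hx, hnx⟩
  obtain ⟨w, hwP, hwmin⟩ := P.exists_min_image (fun y => (L y : ℕ)) ⟨x, hxP⟩
  simp only [hP, Finset.mem_filter, Finset.mem_univ, true_and] at hwP
  obtain ⟨hw1, hw2⟩ := hwP
  have hblock : ∀ y : X, (L z₃ : ℕ) ≤ (L y : ℕ) → (L y : ℕ) < (L w : ℕ) → ¬ y < w := by
    intro y hy1 hy2 hlt
    rcases eq_or_lt_of_le hy1 with heq | hlt2
    · exact hw2 ((val_eq_imp heq.symm) ▸ hlt.le : z₃ ≤ w)
    · by_cases hyz : z₃ ≤ y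
      · exact hw2 (hyz.trans hlt.le)
      · have hyP : y ∈ P := by
          simp only [hP, Finset.mem_filter, Finset.mem_univ, true_and]
          exact ⟨hlt2, hyz⟩
        have := hwmin y hyP
        omega
  obtain ⟨L', hE, h0, hbelow, hwin, habove⟩ := push_down ((L w : ℕ) - (L z₃ : ℕ)) hL (by omega) hblock
  refine ⟨L', hE, ?_, ?_, ?_⟩
  · exact hbelow z₁ (by have := hL _ _ (h12.trans h23); rw [Fin.lt_def] at this; omega)
  · exact hbelow z₂ (by have := hL _ _ h23; rw [Fin.lt_def] at this; omega)
  · exact hwin z₃ (by omega) (by omega)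

/-- Cross `z₂` upward with the highest element below `z₂` that is not `≤ z₂`. -/
lemma crossZ2up {L : X ≃ Fin (Fintype.card X)} (hL : Ext L) {x : X}
    (hx : (L x : ℕ) < (L z₂ : ℕ)) (hnx : ¬ x ≤ z₂) (h12 : z₁ < z₂) (h23 : z₂ < z₃) :
    ∃ L' : X ≃ Fin (Fintype.card X), Ext L' ∧ (L' z₂ : ℕ) + 1 = (L z₂ : ℕ) ∧
      (L' z₃ : ℕ) = (L z₃ : ℕ) ∧
      (((∃ w : X, (L w : ℕ) < (L z₁ : ℕ) ∧ ¬ w ≤ z₁) ∧ (L' z₁ : ℕ) + 1 = (L z₁ : ℕ)) ∨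
        ((L' z₁ : ℕ) = (L z₁ : ℕ) ∧ (L z₁ : ℕ) + 1 < (L z₂ : ℕ))) := by
  classical
  set P : Finset X := Finset.univ.filter (fun y : X => (L y : ℕ) < (L z₂ : ℕ) ∧ ¬ y ≤ z₂) with hP
  have hxP : x ∈ P := by
    simp only [hP, Finset.mem_filter, Finset.mem_univ, true_and]
    exact ⟨hx, hnx⟩
  obtain ⟨w, hwP, hwmax⟩ := P.exists_max_image (fun y => (L y : ℕ)) ⟨x, hxP⟩
  simp only [hP, Finset.mem_filter, Finset.mem_univ, true_and] at hwP
  obtain ⟨hw1, hw2⟩ := hwP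
  have hblock : ∀ y : X, (L w : ℕ) < (L y : ℕ) → (L y : ℕ) ≤ (L z₂ : ℕ) → ¬ w < y := by
    intro y hy1 hy2 hlt
    rcases eq_or_lt_of_le hy2 with heq | hlt2
    · exact hw2 ((val_eq_imp heq) ▸ hlt.le)
    · by_cases hyz : y ≤ z₂
      · exact hw2 (hlt.le.trans hyz)
      · have hyP : y ∈ P := by
          simp only [hP, Finset.mem_filter, Finset.mem_univ, true_and]
          exact ⟨hlt2, hyz⟩
        have := hwmax y hyP
        omega
  obtain ⟨L', hE, h0, hbelow, hwin, habove⟩ :=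
    push_up ((L z₂ : ℕ) - (L w : ℕ)) hL (L z₂).isLt (by omega) hblock
  have hz₂ : (L' z₂ : ℕ) + 1 = (L z₂ : ℕ) := hwin z₂ (by omega) (by omega)
  have hz₃ : (L' z₃ : ℕ) = (L z₃ : ℕ) :=
    habove z₃ (by have := hL _ _ h23; rw [Fin.lt_def] at this; omega)
  have hwz₁ : w ≠ z₁ := fun h => hw2 (h ▸ h12.le)
  have h12' : (L z₁ : ℕ) < (L z₂ : ℕ) := by have := hL _ _ h12; rw [Fin.lt_def] at this; omega
  refine ⟨L', hE, hz₂, hz₃, ?_⟩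
  rcases lt_or_gt_of_ne (fun h : (L w : ℕ) = (L z₁ : ℕ) => hwz₁ (val_eq_imp h)) with hlt | hgt
  · left
    constructor
    · exact ⟨w, hlt, fun h => hw2 (h.trans h12.le)⟩
    · exact hwin z₁ (by omega) (by omega)
  · right
    exact ⟨hbelow z₁ (by omega), by omega⟩

/-- Cross `z₂` downward with the lowest element above `z₂` that is not `≥ z₂`. -/
lemma crossZ2down {L : X ≃ Fin (Fintype.card X)} (hL : Ext L) {x : X}
    (hx : (L z₂ : ℕ) < (L x : ℕ)) (hnx : ¬ z₂ ≤ x) (h12 : z₁ < z₂) (h23 : z₂ < z₃) :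
    (∃ L' : X ≃ Fin (Fintype.card X), Ext L' ∧ (L' z₁ : ℕ) = (L z₁ : ℕ) ∧
        (L' z₂ : ℕ) = (L z₂ : ℕ) + 1 ∧ (L' z₃ : ℕ) = (L z₃ : ℕ)) ∨
      ((∃ L' : X ≃ Fin (Fintype.card X), Ext L' ∧ (L' z₁ : ℕ) = (L z₁ : ℕ) ∧
          (L' z₂ : ℕ) = (L z₂ : ℕ) + 1 ∧ (L' z₃ : ℕ) = (L z₃ : ℕ) + 1) ∧
        (∃ L' : X ≃ Fin (Fintype.card X), Ext L' ∧ (L' z₁ : ℕ) = (L z₁ : ℕ) ∧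
          (L' z₂ : ℕ) = (L z₂ : ℕ) ∧ (L' z₃ : ℕ) = (L z₃ : ℕ) + 1)) := by
  classical
  set P : Finset X := Finset.univ.filter (fun y : X => (L z₂ : ℕ) < (L y : ℕ) ∧ ¬ z₂ ≤ y) with hP
  have hxP : x ∈ P := by
    simp only [hP, Finset.mem_filter, Finset.mem_univ, true_and]
    exact ⟨hx, hnx⟩
  obtain ⟨w, hwP, hwmin⟩ := P.exists_min_image (fun y => (L y : ℕ)) ⟨x, hxP⟩
  simp only [hP, Finset.mem_filter, Finset.mem_univ, true_and] at hwP
  obtain ⟨hw1, hw2⟩ := hwP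
  have hmid : ∀ y : X, (L z₂ : ℕ) < (L y : ℕ) → (L y : ℕ) < (L w : ℕ) → z₂ ≤ y := by
    intro y hy1 hy2
    by_contra hyz
    have : y ∈ P := by
      simp only [hP, Finset.mem_filter, Finset.mem_univ, true_and]
      exact ⟨hy1, hyz⟩
    have := hwmin y this
    omega
  have h23' : (L z₂ : ℕ) < (L z₃ : ℕ) := by have := hL _ _ h23; rw [Fin.lt_def] at this; omega
  have h12' : (L z₁ : ℕ) < (L z₂ : ℕ) := by have := hL _ _ h12; rw [Fin.lt_def] at this; omega
  have hwz₃ : w ≠ z₃ := fun h => hw2 (h ▸ h23.le)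
  have hblock : ∀ y : X, (L z₂ : ℕ) ≤ (L y : ℕ) → (L y : ℕ) < (L w : ℕ) → ¬ y < w := by
    intro y hy1 hy2 hlt
    rcases eq_or_lt_of_le hy1 with heq | hlt2
    · exact hw2 ((val_eq_imp heq.symm) ▸ hlt.le : z₂ ≤ w)
    · exact hw2 ((hmid y hlt2 hy2).trans hlt.le)
  rcases lt_or_gt_of_ne (fun h : (L w : ℕ) = (L z₃ : ℕ) => hwz₃ (val_eq_imp h)) with hlt | hgt
  · -- w strictly between z₂ and z₃
    left
    obtain ⟨L', hE, h0, hbelow, hwin, habove⟩ :=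
      push_down ((L w : ℕ) - (L z₂ : ℕ)) hL (by omega) hblock
    exact ⟨L', hE, hbelow z₁ (by omega), hwin z₂ (by omega) (by omega),
      habove z₃ (by omega)⟩
  · -- w above z₃
    right
    constructor
    · obtain ⟨L', hE, h0, hbelow, hwin, habove⟩ :=
        push_down ((L w : ℕ) - (L z₂ : ℕ)) hL (by omega) hblock
      exact ⟨L', hE, hbelow z₁ (by omega), hwin z₂ (by omega) (by omega),
        hwin z₃ (by omega) (by omega)⟩
    · -- partial push, down to z₃ only
      have hblock' : ∀ y : X, (L z₃ : ℕ) ≤ (L y : ℕ) → (L y : ℕ) < (L w : ℕ) → ¬ y < w := by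
        intro y hy1 hy2 hlt
        exact hblock y (by omega) hy2 hlt
      obtain ⟨L', hE, h0, hbelow, hwin, habove⟩ :=
        push_down ((L w : ℕ) - (L z₃ : ℕ)) hL (by omega) hblock'
      exact ⟨L', hE, hbelow z₁ (by omega), hbelow z₂ (by omega),
        hwin z₃ (by omega) (by omega)⟩

/-- There is a linear extension with the prescribed gaps. -/
def Wit (z₁ z₂ z₃ : X) (a b : ℕ) : Prop :=
  ∃ L : X ≃ Fin (Fintype.card X), Ext L ∧
    (L z₂ : ℕ) = (L z₁ : ℕ) + a ∧ (L z₃ : ℕ) = (L z₂ : ℕ) + b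

lemma F_ne_zero_iff (a b : ℕ) : F X z₁ z₂ z₃ a b ≠ 0 ↔ Wit z₁ z₂ z₃ a b := by
  classical
  unfold F
  rw [Nat.card_ne_zero]
  constructor
  · rintro ⟨⟨L, hL⟩, -⟩
    exact ⟨L, hL.1, hL.2.1, hL.2.2⟩
  · rintro ⟨L, hE, hb, hc⟩
    refine ⟨⟨⟨L, hE, hb, hc⟩⟩, ?_⟩
    infer_instance

end CPV

theorem all_comparable_to_middle (X : Type) [PartialOrder X] [Fintype X]
    (z₁ z₂ z₃ : X) (h12 : z₁ < z₂) (h23 : z₂ < z₃)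
    (k l : ℕ) (hk : 1 ≤ k) (hl : 1 ≤ l)
    (h1 : F X z₁ z₂ z₃ k (l + 2) = 0) (h2 : F X z₁ z₂ z₃ (k + 2) l = 0)
    (h3 : 0 < F X z₁ z₂ z₃ k l * F X z₁ z₂ z₃ (k + 1) (l + 1)) :
    ∀ u : X, u ≤ z₂ ∨ z₂ ≤ u := by
  classical
  open CPV in
  intro u
  by_contra hu
  push_neg at hu
  obtain ⟨hu1, hu2⟩ := hu
  have h3a : F X z₁ z₂ z₃ k l ≠ 0 := by
    intro h; rw [h] at h3; simp at h3
  have h3b : F X z₁ z₂ z₃ (k + 1) (l + 1) ≠ 0 := by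
    intro h; rw [h] at h3; simp at h3
  obtain ⟨L0, hL0, hL0a, hL0b⟩ := (CPV.F_ne_zero_iff k l).mp h3a
  obtain ⟨M, hM, hMa, hMb⟩ := (CPV.F_ne_zero_iff (k+1) (l+1)).mp h3b
  have hnW1 : ¬ CPV.Wit z₁ z₂ z₃ k (l + 2) := fun hW => (CPV.F_ne_zero_iff _ _).mpr hW h1
  have hnW2 : ¬ CPV.Wit z₁ z₂ z₃ (k + 2) l := fun hW => (CPV.F_ne_zero_iff _ _).mpr hW h2
  -- global inequality (I)
  have hIa := CPV.d1_le (z₁ := z₁) hM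
  have hIb := CPV.u3_le (z₃ := z₃) hM
  have hI : (Finset.univ.filter fun x : X => x < z₁).card + k + l +
      (Finset.univ.filter fun x : X => z₃ < x).card + 3 ≤ Fintype.card X := by omega
  by_cases hA : (Finset.univ.filter fun x : X => x < z₁).card < (L0 z₁ : ℕ)
  · -- produce a (k+1, l) witness V
    obtain ⟨x0, hx01, hx02⟩ := CPV.exists_pool1 hL0 hA
    obtain ⟨V, hV, hVz1, hVz2, hVz3⟩ := CPV.crossZ1 hL0 hx01 hx02 h12 h23
    have hVz1d : (V z₁ : ℕ) = (Finset.univ.filter fun x : X => x < z₁).card := by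
      by_contra hne
      have hlt : (Finset.univ.filter fun x : X => x < z₁).card < (V z₁ : ℕ) := by
        have := CPV.d1_le (z₁ := z₁) hV; omega
      obtain ⟨x1, hx11, hx12⟩ := CPV.exists_pool1 hV hlt
      obtain ⟨V2, hV2, ha, hb, hc⟩ := CPV.crossZ1 hV hx11 hx12 h12 h23
      exact hnW2 ⟨V2, hV2, by omega, by omega⟩
    have hune : (V u : ℕ) ≠ (V z₂ : ℕ) := fun h => hu1 (le_of_eq (CPV.val_eq_imp h))
    rcases lt_or_gt_of_ne hune with hub | hua
    · obtain ⟨W, hW, hWz2, hWz3, hdisj⟩ := CPV.crossZ2up hV hub hu1 h12 h23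
      rcases hdisj with ⟨⟨w, hw1, hw2⟩, -⟩ | ⟨hWz1, -⟩
      · have := CPV.d1_lt_of_pool hV hw1 hw2
        omega
      · by_cases hC : (W z₃ : ℕ) + (Finset.univ.filter fun x : X => z₃ < x).card + 2 ≤
            Fintype.card X
        · obtain ⟨x2, hx21, hx22⟩ := CPV.exists_pool3 hW hC
          obtain ⟨W2, hW2, ha, hb, hc⟩ := CPV.crossZ3 hW hx21 hx22 h12 h23
          exact hnW1 ⟨W2, hW2, by omega, by omega⟩
        · have := CPV.u3_le (z₃ := z₃) hW
          omega
    · rcases CPV.crossZ2down hV hua hu2 h12 h23 with ⟨W, hW, ha, hb, hc⟩ | ⟨⟨W, hW, ha, hb, hc⟩, -⟩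
      · by_cases hC : (W z₃ : ℕ) + (Finset.univ.filter fun x : X => z₃ < x).card + 2 ≤
            Fintype.card X
        · obtain ⟨x2, hx21, hx22⟩ := CPV.exists_pool3 hW hC
          obtain ⟨W2, hW2, ha2, hb2, hc2⟩ := CPV.crossZ3 hW hx21 hx22 h12 h23
          exact hnW2 ⟨W2, hW2, by omega, by omega⟩
        · have := CPV.u3_le (z₃ := z₃) hW
          omega
      · exact hnW2 ⟨W, hW, by omega, by omega⟩
  · -- L0 z₁ is minimal
    have hA' := CPV.d1_le (z₁ := z₁) hL0
    by_cases hC : (L0 z₃ : ℕ) + (Finset.univ.filter fun x : X => z₃ < x).card + 2 ≤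
        Fintype.card X
    · -- produce a (k, l+1) witness V
      obtain ⟨x0, hx01, hx02⟩ := CPV.exists_pool3 hL0 hC
      obtain ⟨V, hV, hVz1, hVz2, hVz3⟩ := CPV.crossZ3 hL0 hx01 hx02 h12 h23
      have hVz3f : (V z₃ : ℕ) + (Finset.univ.filter fun x : X => z₃ < x).card + 1 =
          Fintype.card X := by
        by_cases hC2 : (V z₃ : ℕ) + (Finset.univ.filter fun x : X => z₃ < x).card + 2 ≤
            Fintype.card X
        · obtain ⟨x1, hx11, hx12⟩ := CPV.exists_pool3 hV hC2
          obtain ⟨V2, hV2, ha, hb, hc⟩ := CPV.crossZ3 hV hx11 hx12 h12 h23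
          exact absurd ⟨V2, hV2, by omega, by omega⟩ hnW1
        · have := CPV.u3_le (z₃ := z₃) hV; omega
      have hune : (V u : ℕ) ≠ (V z₂ : ℕ) := fun h => hu1 (le_of_eq (CPV.val_eq_imp h))
      rcases lt_or_gt_of_ne hune with hub | hua
      · obtain ⟨W, hW, hWz2, hWz3, hdisj⟩ := CPV.crossZ2up hV hub hu1 h12 h23
        rcases hdisj with ⟨-, hWz1⟩ | ⟨hWz1, hkk⟩
        · exact hnW1 ⟨W, hW, by omega, by omega⟩
        · by_cases hD : (Finset.univ.filter fun x : X => x < z₁).card < (W z₁ : ℕ)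
          · obtain ⟨x1, hx11, hx12⟩ := CPV.exists_pool1 hW hD
            obtain ⟨W2, hW2, ha, hb, hc⟩ := CPV.crossZ1 hW hx11 hx12 h12 h23
            exact hnW1 ⟨W2, hW2, by omega, by omega⟩
          · have := CPV.d1_le (z₁ := z₁) hW
            omega
      · rcases CPV.crossZ2down hV hua hu2 h12 h23 with ⟨W, hW, ha, hb, hc⟩ | ⟨-, ⟨W, hW, ha, hb, hc⟩⟩
        · by_cases hD : (Finset.univ.filter fun x : X => x < z₁).card < (W z₁ : ℕ)
          · obtain ⟨x1, hx11, hx12⟩ := CPV.exists_pool1 hW hD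
            obtain ⟨W2, hW2, ha2, hb2, hc2⟩ := CPV.crossZ1 hW hx11 hx12 h12 h23
            exact hnW2 ⟨W2, hW2, by omega, by omega⟩
          · have := CPV.d1_le (z₁ := z₁) hW
            omega
        · exact hnW1 ⟨W, hW, by omega, by omega⟩
    · have := CPV.u3_le (z₃ := z₃) hL0
      omega
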